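/- Let U ⊆ ℝ^(n+2) be open, (ξ, N) a null frame on U, and Z : U → ℝ^(n+2) a differentiable closed conformal field with factor φ : U → ℝ. Let p ∈ U and assume that A*_ξ(p) and A_N(p) are symmetric on screen vectors. Then for every screen vector v at p: the derivative of q ↦ η(Z q, ξ q) * η(Z q, N q) at p in the direction v equals -η(v, A_{Z⊥}(p)(Z*(p))). (Flat-Minkowski-ambient form of the paper's lemma relating the screen derivative of the product of the null components of a closed conformal field to the operator A_{Z⊥} applied to its screen part.) -/

import Mathlib

open scoped BigOperators

noncomputable section

/-- Euclidean space `ℝ^m`. -/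
abbrev E (m : ℕ) : Type := EuclideanSpace ℝ (Fin m)

/-- The Minkowski bilinear form `η(x,y) = -(x 0)(y 0) + ∑_{i≥1} (x i)(y i)` on `ℝ^(n+2)`. -/
def eta {n : ℕ} (x y : E (n + 2)) : ℝ :=
  (∑ i, x i * y i) - 2 * (x 0 * y 0)

/-- Screen projection `P_p(w) = w - η(w,N)ξ - η(w,ξ)N` determined by the null frame at a point. -/
def sproj {n : ℕ} (xi N w : E (n + 2)) : E (n + 2) :=
  w - eta w N • xi - eta w xi • N

/-- Screen shape operator `A*_ξ(p)(v) = -P_p(D_v ξ (p))`. -/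
def Astar {n : ℕ} (xi N : E (n + 2) → E (n + 2)) (p v : E (n + 2)) : E (n + 2) :=
  -sproj (xi p) (N p) (fderiv ℝ xi p v)

/-- Shape operator `A_N(p)(v) = -P_p(D_v N (p))`. -/
def AN {n : ℕ} (xi N : E (n + 2) → E (n + 2)) (p v : E (n + 2)) : E (n + 2) :=
  -sproj (xi p) (N p) (fderiv ℝ N p v)

/-- Transversal one-form `τ_p(v) = η(D_v N(p), ξ p)`. -/
def tau {n : ℕ} (xi N : E (n + 2) → E (n + 2)) (p v : E (n + 2)) : ℝ :=
  eta (fderiv ℝ N p v) (xi p)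

/-- Screen part `Z*(p) = P_p(Z p)` of a vector field. -/
def Zstar {n : ℕ} (xi N Z : E (n + 2) → E (n + 2)) (p : E (n + 2)) : E (n + 2) :=
  sproj (xi p) (N p) (Z p)

/-- `A_{Z⊥}(p)(v) = η(Z p, N p) • A*_ξ(p)(v) + η(Z p, ξ p) • A_N(p)(v)`. -/
def AZperp {n : ℕ} (xi N Z : E (n + 2) → E (n + 2)) (p v : E (n + 2)) : E (n + 2) :=
  eta (Z p) (N p) • Astar xi N p v + eta (Z p) (xi p) • AN xi N p v

/- Auxiliary algebraic lemmas for `eta`. -/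

lemma eta_comm {n : ℕ} (x y : E (n+2)) : eta x y = eta y x := by
  simp [eta, mul_comm]

lemma eta_add_left {n : ℕ} (x x' y : E (n+2)) : eta (x + x') y = eta x y + eta x' y := by
  simp [eta, add_mul, Finset.sum_add_distrib]; ring

lemma eta_sub_left {n : ℕ} (x x' y : E (n+2)) : eta (x - x') y = eta x y - eta x' y := by
  simp [eta, sub_mul, Finset.sum_sub_distrib]; ring

lemma eta_smul_left {n : ℕ} (c : ℝ) (x y : E (n+2)) : eta (c • x) y = c * eta x y := by
  simp only [eta, PiLp.smul_apply, smul_eq_mul, mul_sub, Finset.mul_sum]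
  congr 1
  · exact Finset.sum_congr rfl (fun i _ => by ring)
  · ring

lemma eta_neg_left {n : ℕ} (x y : E (n+2)) : eta (-x) y = -eta x y := by
  simp [eta]; ring

lemma eta_add_right {n : ℕ} (x y y' : E (n+2)) : eta x (y + y') = eta x y + eta x y' := by
  rw [eta_comm, eta_add_left, eta_comm y x, eta_comm y' x]

lemma eta_sub_right {n : ℕ} (x y y' : E (n+2)) : eta x (y - y') = eta x y - eta x y' := by
  rw [eta_comm, eta_sub_left, eta_comm y x, eta_comm y' x]

lemma eta_smul_right {n : ℕ} (c : ℝ) (x y : E (n+2)) : eta x (c • y) = c * eta x y := by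
  rw [eta_comm, eta_smul_left, eta_comm y x]

lemma eta_neg_right {n : ℕ} (x y : E (n+2)) : eta x (-y) = -eta x y := by
  rw [eta_comm, eta_neg_left, eta_comm y x]

/- Auxiliary calculus lemmas. -/

lemma coord_diffAt {n : ℕ} {F : E (n+2) → E (n+2)} {p : E (n+2)}
    (hF : DifferentiableAt ℝ F p) : DifferentiableAt ℝ (fun q => F q 0) p := by
  have : (fun q => F q 0) = fun q => (EuclideanSpace.proj (0 : Fin (n+2))) (F q) := by
    funext q; simp
  rw [this]
  exact (EuclideanSpace.proj (0 : Fin (n+2))).differentiableAt.comp p hF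

lemma coord_fderiv {n : ℕ} {F : E (n+2) → E (n+2)} {p : E (n+2)}
    (hF : DifferentiableAt ℝ F p) (v : E (n+2)) :
    fderiv ℝ (fun q => F q 0) p v = fderiv ℝ F p v 0 := by
  have h := ((EuclideanSpace.proj (0 : Fin (n+2))).hasFDerivAt.comp p hF.hasFDerivAt).fderiv
  have e : (fun q => F q 0) = (EuclideanSpace.proj (0 : Fin (n+2))) ∘ F := by
    funext q; simp [Function.comp]
  rw [e, h]; simp

lemma eta_diffAt {n : ℕ} {F G : E (n+2) → E (n+2)} {p : E (n+2)}
    (hF : DifferentiableAt ℝ F p) (hG : DifferentiableAt ℝ G p) :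
    DifferentiableAt ℝ (fun q => eta (F q) (G q)) p := by
  have : (fun q => eta (F q) (G q))
      = fun q => (inner ℝ (F q) (G q) : ℝ) - 2 * (F q 0 * G q 0) := by
    funext q; simp [eta, PiLp.inner_apply, RCLike.inner_apply, conj_trivial, mul_comm]
  rw [this]
  exact (hF.inner ℝ hG).sub (((coord_diffAt hF).mul (coord_diffAt hG)).const_mul 2)

lemma eta_fderiv {n : ℕ} {F G : E (n+2) → E (n+2)} {p : E (n+2)}
    (hF : DifferentiableAt ℝ F p) (hG : DifferentiableAt ℝ G p) (v : E (n+2)) :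
    fderiv ℝ (fun q => eta (F q) (G q)) p v
      = eta (fderiv ℝ F p v) (G p) + eta (F p) (fderiv ℝ G p v) := by
  have e : (fun q => eta (F q) (G q))
      = fun q => (inner ℝ (F q) (G q) : ℝ) - 2 * (F q 0 * G q 0) := by
    funext q; simp [eta, PiLp.inner_apply, RCLike.inner_apply, conj_trivial, mul_comm]
  have d1 : DifferentiableAt ℝ (fun q => (inner ℝ (F q) (G q) : ℝ)) p := hF.inner ℝ hG
  have d2 : DifferentiableAt ℝ (fun q => F q 0 * G q 0) p :=
    (coord_diffAt hF).mul (coord_diffAt hG)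
  rw [e, fderiv_fun_sub d1 (d2.const_mul 2)]
  simp only [ContinuousLinearMap.sub_apply]
  rw [fderiv_inner_apply ℝ hF hG]
  rw [fderiv_const_mul d2]
  simp only [ContinuousLinearMap.smul_apply, smul_eq_mul]
  rw [fderiv_fun_mul (coord_diffAt hF) (coord_diffAt hG)]
  simp only [ContinuousLinearMap.add_apply, ContinuousLinearMap.smul_apply, smul_eq_mul,
    coord_fderiv hF, coord_fderiv hG]
  simp [eta, PiLp.inner_apply, RCLike.inner_apply, conj_trivial, mul_comm]
  ring

/-- For a closed conformal field `Z` and an integrable (symmetric) screen,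
the screen derivative of `η(Z,ξ)η(Z,N)` equals `-η(v, A_{Z⊥}(Z*))`
(flat Minkowski ambient form of Lemma on the screen derivative). -/
theorem screen_derivative_product_null_components {n : ℕ}
    (U : Set (E (n + 2))) (hU : IsOpen U)
    (ξ N Z : E (n + 2) → E (n + 2)) (φ : E (n + 2) → ℝ) (p : E (n + 2)) (hp : p ∈ U)
    (hξd : ∀ q ∈ U, DifferentiableAt ℝ ξ q)
    (hNd : ∀ q ∈ U, DifferentiableAt ℝ N q)
    (hZd : ∀ q ∈ U, DifferentiableAt ℝ Z q)
    (hξξ : ∀ q ∈ U, eta (ξ q) (ξ q) = 0)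
    (hNN : ∀ q ∈ U, eta (N q) (N q) = 0)
    (hξN : ∀ q ∈ U, eta (ξ q) (N q) = 1)
    (hCC : ∀ q ∈ U, fderiv ℝ Z q = φ q • ContinuousLinearMap.id ℝ (E (n + 2)))
    (hAsym : ∀ v w : E (n + 2),
      eta v (ξ p) = 0 → eta v (N p) = 0 → eta w (ξ p) = 0 → eta w (N p) = 0 →
      eta (Astar ξ N p v) w = eta v (Astar ξ N p w))
    (hANsym : ∀ v w : E (n + 2),
      eta v (ξ p) = 0 → eta v (N p) = 0 → eta w (ξ p) = 0 → eta w (N p) = 0 →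
      eta (AN ξ N p v) w = eta v (AN ξ N p w)) :
    ∀ v : E (n + 2), eta v (ξ p) = 0 → eta v (N p) = 0 →
      fderiv ℝ (fun q => eta (Z q) (ξ q) * eta (Z q) (N q)) p v =
        -eta v (AZperp ξ N Z p (Zstar ξ N Z p)) := by
  intro v hvξ hvN
  have hξp := hξd p hp
  have hNp := hNd p hp
  have hZp := hZd p hp
  -- derivative of Z
  have hDZ : fderiv ℝ Z p v = φ p • v := by rw [hCC p hp]; rfl
  -- derivatives of the constant frame products
  have hconst : ∀ (F G : E (n+2) → E (n+2)) (c : ℝ), (∀ q ∈ U, eta (F q) (G q) = c) →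
      fderiv ℝ (fun q => eta (F q) (G q)) p = 0 := by
    intro F G c h
    have hev : (fun q => eta (F q) (G q)) =ᶠ[nhds p] fun _ => c :=
      Filter.eventuallyEq_of_mem (hU.mem_nhds hp) h
    rw [hev.fderiv_eq]
    exact fderiv_const_apply c
  have h1 : eta (ξ p) (fderiv ℝ ξ p v) = 0 := by
    have h := eta_fderiv hξp hξp v
    rw [hconst ξ ξ 0 hξξ] at h
    simp only [ContinuousLinearMap.zero_apply] at h
    have hc := eta_comm (fderiv ℝ ξ p v) (ξ p)
    linarith
  have h2 : eta (N p) (fderiv ℝ N p v) = 0 := by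
    have h := eta_fderiv hNp hNp v
    rw [hconst N N 0 hNN] at h
    simp only [ContinuousLinearMap.zero_apply] at h
    have hc := eta_comm (fderiv ℝ N p v) (N p)
    linarith
  have h3 : eta (fderiv ℝ ξ p v) (N p) + eta (ξ p) (fderiv ℝ N p v) = 0 := by
    have h := eta_fderiv hξp hNp v
    rw [hconst ξ N 1 hξN] at h
    simp only [ContinuousLinearMap.zero_apply] at h
    linarith
  -- the screen part of Z is a screen vector
  have hWξ : eta (Zstar ξ N Z p) (ξ p) = 0 := by
    simp only [Zstar, sproj, eta_sub_left, eta_smul_left]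
    rw [hξξ p hp, eta_comm (N p) (ξ p), hξN p hp]
    ring
  have hWN : eta (Zstar ξ N Z p) (N p) = 0 := by
    simp only [Zstar, sproj, eta_sub_left, eta_smul_left]
    rw [hNN p hp, hξN p hp]
    ring
  -- eta with the screen part ignores the screen projection
  have hWproj : ∀ w : E (n+2), eta (Zstar ξ N Z p) (sproj (ξ p) (N p) w)
      = eta (Zstar ξ N Z p) w := by
    intro w
    simp only [sproj, eta_sub_right, eta_smul_right, hWξ, hWN]
    ring
  -- expansion of eta (Z p) against a vector via the screen decomposition
  have expand : ∀ w : E (n+2), eta (Zstar ξ N Z p) w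
      = eta (Z p) w - eta (Z p) (N p) * eta (ξ p) w - eta (Z p) (ξ p) * eta (N p) w := by
    intro w
    simp only [Zstar, sproj, eta_sub_left, eta_smul_left]
  -- key identities
  have keyξ : eta (Z p) (fderiv ℝ ξ p v)
      = -eta v (Astar ξ N p (Zstar ξ N Z p))
        - eta (Z p) (ξ p) * eta (ξ p) (fderiv ℝ N p v) := by
    have eA : eta (Zstar ξ N Z p) (Astar ξ N p v) = -eta (Zstar ξ N Z p) (fderiv ℝ ξ p v) := by
      rw [show Astar ξ N p v = -sproj (ξ p) (N p) (fderiv ℝ ξ p v) from rfl,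
        eta_neg_right, hWproj]
    have eSym : eta (Zstar ξ N Z p) (Astar ξ N p v)
        = eta v (Astar ξ N p (Zstar ξ N Z p)) := by
      rw [eta_comm]
      exact hAsym v (Zstar ξ N Z p) hvξ hvN hWξ hWN
    have eW := expand (fderiv ℝ ξ p v)
    have eNξ : eta (N p) (fderiv ℝ ξ p v) = -eta (ξ p) (fderiv ℝ N p v) := by
      have := eta_comm (fderiv ℝ ξ p v) (N p); linarith
    rw [eNξ, h1] at eW
    linarith [eSym ▸ eA]
  have keyN : eta (Z p) (fderiv ℝ N p v)
      = -eta v (AN ξ N p (Zstar ξ N Z p))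
        + eta (Z p) (N p) * eta (ξ p) (fderiv ℝ N p v) := by
    have eA : eta (Zstar ξ N Z p) (AN ξ N p v) = -eta (Zstar ξ N Z p) (fderiv ℝ N p v) := by
      rw [show AN ξ N p v = -sproj (ξ p) (N p) (fderiv ℝ N p v) from rfl,
        eta_neg_right, hWproj]
    have eSym : eta (Zstar ξ N Z p) (AN ξ N p v)
        = eta v (AN ξ N p (Zstar ξ N Z p)) := by
      rw [eta_comm]
      exact hANsym v (Zstar ξ N Z p) hvξ hvN hWξ hWN
    have eW := expand (fderiv ℝ N p v)
    rw [h2] at eW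
    linarith [eSym ▸ eA]
  -- compute the two factors' derivatives
  have dA : DifferentiableAt ℝ (fun q => eta (Z q) (ξ q)) p := eta_diffAt hZp hξp
  have dB : DifferentiableAt ℝ (fun q => eta (Z q) (N q)) p := eta_diffAt hZp hNp
  have hA' : fderiv ℝ (fun q => eta (Z q) (ξ q)) p v = eta (Z p) (fderiv ℝ ξ p v) := by
    rw [eta_fderiv hZp hξp, hDZ, eta_smul_left, hvξ]; ring
  have hB' : fderiv ℝ (fun q => eta (Z q) (N q)) p v = eta (Z p) (fderiv ℝ N p v) := by
    rw [eta_fderiv hZp hNp, hDZ, eta_smul_left, hvN]; ring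
  rw [fderiv_fun_mul dA dB]
  simp only [ContinuousLinearMap.add_apply, ContinuousLinearMap.smul_apply, smul_eq_mul,
    hA', hB']
  rw [show AZperp ξ N Z p (Zstar ξ N Z p)
      = eta (Z p) (N p) • Astar ξ N p (Zstar ξ N Z p)
        + eta (Z p) (ξ p) • AN ξ N p (Zstar ξ N Z p) from rfl,
    eta_add_right, eta_smul_right, eta_smul_right]
  linear_combination eta (Z p) (ξ p) * keyN + eta (Z p) (N p) * keyξ

end
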